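/- arXiv:2601.12064 — 3 statements merged into one kernel-verified Lean document; each statement's English description precedes it below -/
import Mathlib

section
/- For a distribution function F on ℝ with left-continuous inverse F⁻¹ and a probability level p ∈ (0,1) with ∫_p^1 F⁻¹(u) du < ∞, the Tail Value-at-Risk T_p = (1/(1-p)) ∫_p^1 F⁻¹(u) du satisfies T_p = (1/(1-p)) [ E(X · 1{X > ξ_p}) + ξ_p · (F(ξ_p) - p) ], where ξ_p = F⁻¹(p) and X is a random variable with distribution function F. -/
open MeasureTheory Set

open Filter ProbabilityTheory Topology in
lemma galois_aux_stmt0 (ν : Measure ℝ) [IsProbabilityMeasure ν] {u : ℝ}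
    (hu : u ∈ Set.Ioo (0:ℝ) 1)
    (x : ℝ) : sInf {y | u ≤ cdf ν y} ≤ x ↔ u ≤ cdf ν x := by
  set S := {y | u ≤ cdf ν y} with hS
  have hne : S.Nonempty := by
    obtain ⟨y, hy⟩ := ((tendsto_cdf_atTop ν).eventually (eventually_ge_nhds hu.2)).exists
    exact ⟨y, hy⟩
  have hbdd : BddBelow S := by
    obtain ⟨y, hy⟩ := ((tendsto_cdf_atBot ν).eventually (eventually_lt_nhds hu.1)).exists
    refine ⟨y, fun z hz => ?_⟩
    by_contra h
    exact absurd (le_trans hz (monotone_cdf ν (le_of_not_ge h))) (not_le.2 hy)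
  have hmem : sInf S ∈ S := by
    have hcl : sInf S ∈ closure S := csInf_mem_closure hne hbdd
    have hsub : S ⊆ Ici (sInf S) := fun z hz => csInf_le hbdd hz
    have hc : ContinuousWithinAt (cdf ν) S (sInf S) :=
      ((cdf ν).right_continuous (sInf S)).mono hsub
    have hne' : (𝓝[S] (sInf S)).NeBot := mem_closure_iff_nhdsWithin_neBot.mp hcl
    exact ge_of_tendsto hc (eventually_mem_nhdsWithin.mono fun z hz => hz)
  exact ⟨fun h => le_trans hmem (monotone_cdf ν h), fun h => csInf_le hbdd h⟩

/-- For a distribution function `F` of a random variable `X` with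
left-continuous inverse `Finv` and probability level `p ∈ (0,1)` with
`∫_p^1 Finv` finite, the TVaR `T_p = (1/(1-p)) ∫_p^1 Finv u du` satisfies
`T_p = (1/(1-p)) (E(X ⬝ 1{X > ξ_p}) + ξ_p (F ξ_p - p))` where `ξ_p = Finv p`. -/
theorem stmt0 {Ω : Type*} [MeasurableSpace Ω] (μ : Measure Ω) [IsProbabilityMeasure μ]
    (X : Ω → ℝ) (hX : Measurable X)
    (F : ℝ → ℝ) (hF : ∀ x, F x = (μ {ω | X ω ≤ x}).toReal)
    (Finv : ℝ → ℝ) (hFinv : ∀ u ∈ Set.Ioo (0:ℝ) 1, Finv u = sInf {x | u ≤ F x})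
    (p : ℝ) (hp : p ∈ Set.Ioo (0:ℝ) 1)
    (hIntFinv : IntervalIntegrable Finv volume p 1)
    (hIntX : Integrable (fun ω => if Finv p < X ω then X ω else 0) μ) :
    (1/(1-p)) * ∫ u in p..1, Finv u
      = (1/(1-p)) * ((∫ ω, (if Finv p < X ω then X ω else 0) ∂μ)
          + Finv p * (F (Finv p) - p)) := by
  clear hIntX
  open Filter ProbabilityTheory Topology in
  · obtain ⟨hp0, hp1⟩ := hp
    set ν := μ.map X with hν
    have hνP : IsProbabilityMeasure ν := Measure.isProbabilityMeasure_map hX.aemeasurable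
    have hFeq : F = ⇑(cdf ν) := by
      funext x
      rw [hF, cdf_eq_real, measureReal_def, hν, Measure.map_apply hX measurableSet_Iic]
      rfl
    subst hFeq
    have hgal : ∀ u ∈ Set.Ioo (0:ℝ) 1, ∀ x, Finv u ≤ x ↔ u ≤ cdf ν x := by
      intro u hu x
      rw [hFinv u hu]
      exact galois_aux_stmt0 ν hu x
    have hmono : MonotoneOn Finv (Set.Ioo (0:ℝ) 1) := by
      intro u hu v hv huv
      exact (hgal u hu (Finv v)).mpr (le_trans huv ((hgal v hv (Finv v)).mp le_rfl))
    set ξ := Finv p with hξ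
    set q := cdf ν ξ with hq
    have hpq : p ≤ q := (hgal p ⟨hp0, hp1⟩ ξ).mp le_rfl
    have hq1 : q ≤ 1 := cdf_le_one ν ξ
    have hq0 : 0 < q := lt_of_lt_of_le hp0 hpq
    -- pushforward of Lebesgue on (0,1) under Finv is ν
    have hFmeas : AEMeasurable Finv (volume.restrict (Set.Ioo (0:ℝ) 1)) :=
      aemeasurable_restrict_of_monotoneOn measurableSet_Ioo hmono
    have hmap : (volume.restrict (Set.Ioo (0:ℝ) 1)).map Finv = ν := by
      have h1 : IsFiniteMeasure ((volume.restrict (Set.Ioo (0:ℝ) 1)).map Finv) := by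
        constructor
        rw [Measure.map_apply_of_aemeasurable hFmeas MeasurableSet.univ]
        simp [Real.volume_Ioo]
      refine Measure.ext_of_Iic _ _ (fun x => ?_)
      rw [Measure.map_apply_of_aemeasurable hFmeas measurableSet_Iic,
        Measure.restrict_apply' measurableSet_Ioo]
      have hset : (Finv ⁻¹' Iic x) ∩ Set.Ioo (0:ℝ) 1
          = Iic (cdf ν x) ∩ Set.Ioo (0:ℝ) 1 := by
        ext u
        simp only [mem_inter_iff, mem_preimage, mem_Iic, and_congr_left_iff]
        intro hu
        exact hgal u hu x
      rw [hset, ← ofReal_cdf ν x]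
      have hc0 : 0 ≤ cdf ν x := cdf_nonneg ν x
      rcases lt_or_ge (cdf ν x) 1 with hc1 | hc1
      · have : Iic (cdf ν x) ∩ Set.Ioo (0:ℝ) 1 = Ioc 0 (cdf ν x) := by
          ext u
          simp only [mem_inter_iff, mem_Iic, mem_Ioo, mem_Ioc]
          constructor
          · rintro ⟨h1, h2, h3⟩; exact ⟨h2, h1⟩
          · rintro ⟨h1, h2⟩; exact ⟨h2, h1, lt_of_le_of_lt h2 hc1⟩
        rw [this, Real.volume_Ioc, sub_zero]
      · have hc1' : cdf ν x = 1 := le_antisymm (cdf_le_one ν x) hc1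
        have : Iic (cdf ν x) ∩ Set.Ioo (0:ℝ) 1 = Set.Ioo (0:ℝ) 1 := by
          rw [hc1']
          ext u
          simp only [mem_inter_iff, mem_Iic, mem_Ioo]
          exact ⟨fun h => h.2, fun h => ⟨h.2.le.trans le_rfl, h⟩⟩
        rw [this, Real.volume_Ioo, hc1']
        norm_num
    -- split the integral
    have hint1 : IntervalIntegrable Finv volume p q := by
      apply hIntFinv.mono_set
      rw [uIcc_of_le hpq, uIcc_of_le hp1.le]
      exact Icc_subset_Icc le_rfl hq1
    have hint2 : IntervalIntegrable Finv volume q 1 := by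
      apply hIntFinv.mono_set
      rw [uIcc_of_le hq1, uIcc_of_le hp1.le]
      exact Icc_subset_Icc hpq le_rfl
    have hsplit : ∫ u in p..1, Finv u = (∫ u in p..q, Finv u) + ∫ u in q..1, Finv u :=
      (intervalIntegral.integral_add_adjacent_intervals hint1 hint2).symm
    -- middle part
    have hmid : ∫ u in p..q, Finv u = ξ * (q - p) := by
      have hae : ∀ᵐ u ∂(volume : Measure ℝ), u ∈ Set.uIoc p q → Finv u = ξ := by
        have hqa : ∀ᵐ u ∂(volume : Measure ℝ), u ≠ q :=
          mem_ae_iff.mpr (by simp [compl_setOf])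
        filter_upwards [hqa] with u hu hmem
        rw [uIoc_of_le hpq] at hmem
        have huo : u ∈ Set.Ioo p q := ⟨hmem.1, lt_of_le_of_ne hmem.2 hu⟩
        have hu01 : u ∈ Set.Ioo (0:ℝ) 1 :=
          ⟨lt_trans hp0 huo.1, lt_of_lt_of_le huo.2 hq1⟩
        refine le_antisymm ((hgal u hu01 ξ).mpr huo.2.le) ?_
        exact hmono ⟨hp0, hp1⟩ hu01 huo.1.le
      rw [intervalIntegral.integral_congr_ae hae, intervalIntegral.integral_const, smul_eq_mul,
        mul_comm]
    -- tail part
    set g : ℝ → ℝ := fun x => if ξ < x then x else 0 with hg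
    have hgmeas : Measurable g :=
      Measurable.ite (measurableSet_lt measurable_const measurable_id) measurable_id
        measurable_const
    have htail : ∫ u in q..1, Finv u = ∫ ω, g (X ω) ∂μ := by
      rw [← integral_map hX.aemeasurable hgmeas.aestronglyMeasurable, ← hν, ← hmap,
        integral_map hFmeas hgmeas.aestronglyMeasurable]
      have hae2 : ∀ᵐ u ∂(volume.restrict (Set.Ioo (0:ℝ) 1)),
          g (Finv u) = (Set.Ioi q).indicator Finv u := by
        filter_upwards [ae_restrict_mem measurableSet_Ioo] with u hu
        rcases lt_or_ge q u with h | h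
        · have : ξ < Finv u := by
            by_contra hcon
            exact absurd ((hgal u hu ξ).mp (le_of_not_gt hcon)) (not_le.2 h)
          simp [hg, this, indicator_of_mem (mem_Ioi.mpr h)]
        · have : ¬ ξ < Finv u := not_lt.2 ((hgal u hu ξ).mpr h)
          simp [hg, this, indicator_of_notMem (notMem_Ioi.mpr h)]
      rw [integral_congr_ae hae2, integral_indicator measurableSet_Ioi,
        Measure.restrict_restrict measurableSet_Ioi]
      have hseq : Set.Ioi q ∩ Set.Ioo (0:ℝ) 1 = Set.Ioo q 1 := by
        ext u
        simp only [mem_inter_iff, mem_Ioi, mem_Ioo]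
        exact ⟨fun h => ⟨h.1, h.2.2⟩, fun h => ⟨h.1, lt_trans hq0 h.1, h.2⟩⟩
      rw [hseq, intervalIntegral.integral_of_le hq1, integral_Ioc_eq_integral_Ioo]
    rw [hsplit, hmid, htail]
    ring_nf
    rfl
end

section
/- If the quantile function F⁻¹ is continuous at p (equivalently F(ξ_p) = p where ξ_p = F⁻¹(p)), then the Tail Value-at-Risk T_p = (1/(1-p)) ∫_p^1 F⁻¹(u) du equals the tail conditional expectation E(X | X > ξ_p). -/
open MeasureTheory Set

/-- If the quantile function `Finv` is continuous at `p`
(equivalently `F (ξ_p) = p` with `ξ_p = Finv p`), then the TVaR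
`(1/(1-p)) ∫_p^1 Finv u du` equals the tail conditional expectation
`E(X | X > ξ_p) = (∫_{X > ξ_p} X) / P(X > ξ_p)`, where `P(X > ξ_p) = 1 - p > 0`. -/
theorem stmt1 {Ω : Type*} [MeasurableSpace Ω] (μ : Measure Ω) [IsProbabilityMeasure μ]
    (X : Ω → ℝ) (hX : Measurable X)
    (F : ℝ → ℝ) (hF : ∀ x, F x = (μ {ω | X ω ≤ x}).toReal)
    (Finv : ℝ → ℝ) (hFinv : ∀ u ∈ Set.Ioo (0:ℝ) 1, Finv u = sInf {x | u ≤ F x})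
    (p : ℝ) (hp : p ∈ Set.Ioo (0:ℝ) 1)
    (hIntFinv : IntervalIntegrable Finv volume p 1)
    (hIntX : Integrable (fun ω => if Finv p < X ω then X ω else 0) μ)
    (hcont : F (Finv p) = p)
    (htail : (μ {ω | Finv p < X ω}).toReal = 1 - p) :
    (1/(1-p)) * ∫ u in p..1, Finv u
      = (∫ ω in {ω | Finv p < X ω}, X ω ∂μ) / (μ {ω | Finv p < X ω}).toReal := by
  obtain ⟨hp0, hp1⟩ := hp
  set ξ := Finv p with hξ
  -- identify F with the cdf of μ.map X
  haveI : IsProbabilityMeasure (μ.map X) := Measure.isProbabilityMeasure_map hX.aemeasurable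
  have hmap : ∀ x, F x = ProbabilityTheory.cdf (μ.map X) x := by
    intro x
    rw [hF, ProbabilityTheory.cdf_eq_real, measureReal_def, Measure.map_apply hX measurableSet_Iic]
    rfl
  have hFmono : Monotone F := by
    intro a b hab
    rw [hmap a, hmap b]
    exact ProbabilityTheory.monotone_cdf _ hab
  have hFle1 : ∀ x, F x ≤ 1 := by
    intro x; rw [hmap]; exact ProbabilityTheory.cdf_le_one _ x
  have hFtop : Filter.Tendsto F Filter.atTop (nhds 1) :=
    (ProbabilityTheory.tendsto_cdf_atTop (μ.map X)).congr (fun x => (hmap x).symm)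
  -- right continuity consequence
  have hFrc : ∀ y (u : ℝ), (∀ ε > (0:ℝ), u ≤ F (y + ε)) → u ≤ F y := by
    intro y u h
    have hc : Filter.Tendsto F (nhdsWithin y (Set.Ioi y)) (nhds (F y)) := by
      have h1 : ContinuousWithinAt (ProbabilityTheory.cdf (μ.map X)) (Set.Ici y) y :=
        (ProbabilityTheory.cdf (μ.map X)).right_continuous y
      have h2 : ContinuousWithinAt F (Set.Ici y) y :=
        h1.congr (fun x _ => hmap x) (hmap y)
      exact h2.tendsto.mono_left (nhdsWithin_mono _ Set.Ioi_subset_Ici_self)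
    refine ge_of_tendsto hc ?_
    filter_upwards [self_mem_nhdsWithin] with x hx
    have h2 := h (x - y) (by simpa using hx)
    have h3 : y + (x - y) = x := by ring
    rwa [h3] at h2
  -- the sets S u = {x | u ≤ F x}
  have hSne : ∀ u : ℝ, u < 1 → {x | u ≤ F x}.Nonempty := by
    intro u hu
    have : ∀ᶠ x in Filter.atTop, u ≤ F x := hFtop.eventually (eventually_ge_nhds hu)
    obtain ⟨x, hx⟩ := this.exists
    exact ⟨x, hx⟩
  have hSgt : ∀ u : ℝ, p < u → ∀ x ∈ {x | u ≤ F x}, ξ < x := by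
    intro u hu x hx
    by_contra hle
    push_neg at hle
    have : F x ≤ F ξ := hFmono hle
    rw [hcont] at this
    exact absurd (le_trans hx this) (not_le.mpr hu)
  have hSbdd : ∀ u : ℝ, p < u → BddBelow {x | u ≤ F x} := by
    intro u hu
    exact ⟨ξ, fun x hx => (hSgt u hu x hx).le⟩
  -- Finv u ≥ ξ on (p,1)
  have hFinv_ge : ∀ u ∈ Set.Ioo p 1, ξ ≤ Finv u := by
    intro u hu
    rw [hFinv u ⟨lt_trans hp0 hu.1, hu.2⟩]
    exact le_csInf (hSne u hu.2) (fun x hx => (hSgt u hu.1 x hx).le)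
  -- key set identity
  have hkey : ∀ t : ℝ, 0 < t →
      {u | t < Finv u - ξ} ∩ Set.Ioo p 1 = Set.Ioo (F (ξ + t)) 1 := by
    intro t ht
    have hpF : p ≤ F (ξ + t) := by
      rw [← hcont]; exact hFmono (by linarith)
    ext u
    simp only [Set.mem_inter_iff, Set.mem_setOf_eq, Set.mem_Ioo]
    constructor
    · rintro ⟨h1, h2, h3⟩
      refine ⟨?_, h3⟩
      by_contra hle
      push_neg at hle
      have hmem : (ξ + t) ∈ {x | u ≤ F x} := hle
      have : Finv u ≤ ξ + t := by
        rw [hFinv u ⟨lt_trans hp0 h2, h3⟩]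
        exact csInf_le (hSbdd u h2) hmem
      linarith
    · rintro ⟨h1, h2⟩
      have hup : p < u := lt_of_le_of_lt hpF h1
      refine ⟨?_, hup, h2⟩
      have hIu : Finv u = sInf {x | u ≤ F x} := hFinv u ⟨lt_trans hp0 hup, h2⟩
      by_contra hle
      push_neg at hle
      have : u ≤ F (ξ + t) := by
        apply hFrc
        intro ε hε
        have : sInf {x | u ≤ F x} < ξ + t + ε := by
          rw [← hIu]; linarith
        obtain ⟨x, hx, hxlt⟩ := exists_lt_of_csInf_lt (hSne u h2) this
        exact le_trans hx (hFmono hxlt.le)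
      linarith
    -- done key
  -- measurable tail set in Ω
  have hS : MeasurableSet {ω | ξ < X ω} := hX measurableSet_Ioi
  -- tail probability formula
  have htailp : ∀ t : ℝ, 0 < t → (μ {ω | ξ + t < X ω}).toReal = 1 - F (ξ + t) := by
    intro t ht
    have hc : {ω | ξ + t < X ω} = {ω | X ω ≤ ξ + t}ᶜ := by
      ext ω; simp [not_le]
    rw [hc, prob_compl_eq_one_sub (show MeasurableSet {ω | X ω ≤ ξ + t} from hX measurableSet_Iic),
      ENNReal.toReal_sub_of_le prob_le_one ENNReal.one_ne_top, ENNReal.toReal_one, hF]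
  -- define the two shifted nonneg functions
  set f : Ω → ℝ := fun ω => if ξ < X ω then X ω - ξ else 0 with hf
  have hfind : f = Set.indicator {ω | ξ < X ω} (fun ω => X ω - ξ) := by
    funext ω
    by_cases h : ξ < X ω <;> simp [hf, Set.indicator, h, Set.mem_setOf_eq]
  have hXind : (fun ω => if ξ < X ω then X ω else 0)
      = Set.indicator {ω | ξ < X ω} X := by
    funext ω
    by_cases h : ξ < X ω <;> simp [Set.indicator, h, Set.mem_setOf_eq]
  have hIntXS : IntegrableOn X {ω | ξ < X ω} μ := by
    rw [← integrable_indicator_iff hS, ← hXind]; exact hIntX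
  have hintsub : IntegrableOn (fun ω => X ω - ξ) {ω | ξ < X ω} μ :=
    hIntXS.sub (integrableOn_const (measure_lt_top μ _).ne)
  have hIntf : Integrable f μ := by
    rw [hfind]
    exact (integrable_indicator_iff hS).mpr hintsub
  have hfnn : 0 ≤ᵐ[μ] f := by
    refine Filter.Eventually.of_forall (fun ω => ?_)
    show (0:ℝ) ≤ if ξ < X ω then X ω - ξ else 0
    by_cases h : ξ < X ω
    · rw [if_pos h]; linarith
    · rw [if_neg h]
  -- layer cake on Ω
  have hlcΩ : ∫ ω, f ω ∂μ = ∫ t in Set.Ioi (0:ℝ), (μ {ω | t < f ω}).toReal :=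
    hIntf.integral_eq_integral_meas_lt hfnn
  -- layer cake on (p,1)
  have hIoo : MeasurableSet (Set.Ioo p 1) := measurableSet_Ioo
  have hIntFioo : IntegrableOn Finv (Set.Ioo p 1) volume :=
    ((intervalIntegrable_iff_integrableOn_Ioc_of_le hp1.le).mp hIntFinv).mono_set
      Set.Ioo_subset_Ioc_self
  have hIntg : Integrable (fun u => Finv u - ξ) (volume.restrict (Set.Ioo p 1)) := by
    refine hIntFioo.sub ?_
    exact integrableOn_const (by simp)
  have hgnn : 0 ≤ᵐ[volume.restrict (Set.Ioo p 1)] (fun u => Finv u - ξ) := by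
    refine (ae_restrict_iff' hIoo).mpr ?_
    refine Filter.Eventually.of_forall (fun u hu => ?_)
    have := hFinv_ge u hu
    show (0:ℝ) ≤ Finv u - ξ
    linarith
  have hlcI : ∫ u in Set.Ioo p 1, (Finv u - ξ)
      = ∫ t in Set.Ioi (0:ℝ), ((volume.restrict (Set.Ioo p 1)) {u | t < Finv u - ξ}).toReal :=
    hIntg.integral_eq_integral_meas_lt hgnn
  -- the two layer cake integrands agree on Ioi 0
  have hmeas_eq : ∀ t ∈ Set.Ioi (0:ℝ),
      ((volume.restrict (Set.Ioo p 1)) {u | t < Finv u - ξ}).toReal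
        = (μ {ω | t < f ω}).toReal := by
    intro t ht
    rw [Set.mem_Ioi] at ht
    have h1 : {ω | t < f ω} = {ω | ξ + t < X ω} := by
      ext ω
      by_cases h : ξ < X ω <;> simp [hf, h, Set.mem_setOf_eq]
      · constructor <;> intro <;> linarith
      · push_neg at h
        constructor <;> intro h2
        · linarith
        · linarith
    rw [h1, htailp t ht, Measure.restrict_apply' hIoo, hkey t ht]
    have hle1 : F (ξ + t) ≤ 1 := hFle1 _
    rw [Real.volume_Ioo, ENNReal.toReal_ofReal (by linarith)]
  have hIeq : ∫ u in Set.Ioo p 1, (Finv u - ξ) = ∫ ω, f ω ∂μ := by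
    rw [hlcI, hlcΩ]
    exact setIntegral_congr_fun measurableSet_Ioi hmeas_eq
  -- volume of Ioo p 1
  have hvol : (volume (Set.Ioo p 1)).toReal = 1 - p := by
    rw [Real.volume_Ioo, ENNReal.toReal_ofReal (by linarith)]
  -- LHS decomposition
  have hL : ∫ u in p..1, Finv u = (∫ ω, f ω ∂μ) + ξ * (1 - p) := by
    rw [intervalIntegral.integral_of_le hp1.le, integral_Ioc_eq_integral_Ioo]
    have : ∫ u in Set.Ioo p 1, Finv u
        = ∫ u in Set.Ioo p 1, ((Finv u - ξ) + ξ) := by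
      congr 1; funext u; ring
    rw [this, integral_add hIntg (integrableOn_const (by simp)),
      setIntegral_const, measureReal_def, hIeq, hvol, smul_eq_mul]
    ring
  -- RHS decomposition
  have hR : ∫ ω in {ω | ξ < X ω}, X ω ∂μ = (∫ ω, f ω ∂μ) + ξ * (1 - p) := by
    have h1 : ∫ ω in {ω | ξ < X ω}, X ω ∂μ
        = ∫ ω in {ω | ξ < X ω}, ((X ω - ξ) + ξ) ∂μ := by
      congr 1; funext ω; ring
    rw [h1, integral_add hintsub (integrableOn_const (measure_lt_top μ _).ne),
      setIntegral_const, measureReal_def, htail, smul_eq_mul, ← integral_indicator hS, ← hfind]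
    ring
  rw [htail, hL, hR]
  ring
end

section
/- (Deterministic version of Lemma 1 remainder nonnegativity.) Let X_{1:n} ≤ ⋯ ≤ X_{n:n} be order statistics of real numbers, p ∈ (0,1), ξ a real number, and N = card{i : X_i ≤ ξ}, so that X_{i:n} ≤ ξ for i ≤ N and X_{i:n} > ξ for i > N. Define R = ((np - ⌊np⌋)/(n(1-p))) (X_{⌊np⌋+1:n} - ξ) - (sign(N - ⌊np⌋)/(n(1-p))) Σ_{i=(⌊np⌋∧N)+1}^{⌊np⌋∨N} (X_{i:n} - ξ). Then R ≥ 0. -/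
open Finset

lemma stmt6_aux {d θ A s S : ℝ} (hd : 0 < d) (h : 0 ≤ θ * A - s * S) :
    0 ≤ θ / d * A - s / d * S := by
  have heq : θ / d * A - s / d * S = (θ * A - s * S) / d := by ring
  rw [heq]
  exact div_nonneg h hd.le

/-- deterministic remainder nonnegativity, Lemma 1: with
`Y` the order statistics (0-indexed), `N = card {i : X_i ≤ ξ}` so that
`X_{i:n} ≤ ξ` for `i ≤ N` and `X_{i:n} > ξ` for `i > N`, the remainder
`R = ((np-⌊np⌋)/(n(1-p))) (X_{⌊np⌋+1:n} - ξ)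
   - (sign(N-⌊np⌋)/(n(1-p))) ∑_{i=(⌊np⌋∧N)+1}^{⌊np⌋∨N} (X_{i:n} - ξ)`
is nonnegative.  The 1-indexed sum over `(⌊np⌋∧N)+1 ≤ i ≤ ⌊np⌋∨N` is the
0-indexed sum over `min ⌊np⌋ N ≤ j < max ⌊np⌋ N`. -/
theorem stmt6 (n : ℕ) (hn : 0 < n) (p ξ : ℝ) (hp : p ∈ Set.Ioo (0:ℝ) 1)
    (Y : Fin n → ℝ) (hmono : Monotone Y)
    (N : ℕ) (hNn : N ≤ n)
    (hsort : ∀ i : Fin n, ((i : ℕ) < N → Y i ≤ ξ) ∧ (N ≤ (i : ℕ) → ξ < Y i))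
    (hk : ⌊(n:ℝ) * p⌋₊ < n) (R : ℝ)
    (hR : R = (((n:ℝ) * p - ⌊(n:ℝ) * p⌋₊) / ((n:ℝ) * (1-p)))
            * (Y ⟨⌊(n:ℝ) * p⌋₊, hk⟩ - ξ)
        - ((((N : ℤ) - (⌊(n:ℝ) * p⌋₊ : ℤ)).sign : ℝ) / ((n:ℝ) * (1-p)))
            * ∑ i : Fin n,
                (if min ⌊(n:ℝ) * p⌋₊ N ≤ (i:ℕ) ∧ (i:ℕ) < max ⌊(n:ℝ) * p⌋₊ N
                 then Y i - ξ else 0)) :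
    0 ≤ R := by
  obtain ⟨hp0, hp1⟩ := hp
  have hd : 0 < (n:ℝ) * (1-p) := by
    have hn' : (0:ℝ) < n := by exact_mod_cast hn
    nlinarith
  have hθ0 : 0 ≤ (n:ℝ) * p - ⌊(n:ℝ) * p⌋₊ := by
    have := Nat.floor_le (show (0:ℝ) ≤ (n:ℝ) * p by positivity)
    linarith
  have hθ1 : (n:ℝ) * p - ⌊(n:ℝ) * p⌋₊ ≤ 1 := by
    have := Nat.lt_floor_add_one ((n:ℝ) * p)
    linarith
  rw [hR]
  apply stmt6_aux hd
  rcases lt_trichotomy N ⌊(n:ℝ) * p⌋₊ with h | h | h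
  · -- N < k : sign = -1
    have hsign : ((N : ℤ) - (⌊(n:ℝ) * p⌋₊ : ℤ)).sign = -1 := by
      rw [Int.sign_eq_neg_one_iff_neg]; omega
    rw [hsign, min_eq_right h.le, max_eq_left h.le]
    push_cast
    have hSnn : 0 ≤ ∑ i : Fin n,
        (if N ≤ (i:ℕ) ∧ (i:ℕ) < ⌊(n:ℝ) * p⌋₊ then Y i - ξ else 0) := by
      apply Finset.sum_nonneg
      intro i _
      split_ifs with hc
      · linarith [(hsort i).2 hc.1]
      · exact le_refl 0
    have hYk : ξ < Y ⟨⌊(n:ℝ) * p⌋₊, hk⟩ :=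
      (hsort ⟨⌊(n:ℝ) * p⌋₊, hk⟩).2 (by simpa using h.le)
    nlinarith [mul_nonneg hθ0 (by linarith : (0:ℝ) ≤ Y ⟨⌊(n:ℝ) * p⌋₊, hk⟩ - ξ)]
  · -- N = k : sign = 0
    have hsign : ((N : ℤ) - (⌊(n:ℝ) * p⌋₊ : ℤ)).sign = 0 := by
      rw [Int.sign_eq_zero_iff_zero]; omega
    rw [hsign]
    push_cast
    have hYk : ξ < Y ⟨⌊(n:ℝ) * p⌋₊, hk⟩ :=
      (hsort ⟨⌊(n:ℝ) * p⌋₊, hk⟩).2 (by simp [h])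
    nlinarith [mul_nonneg hθ0 (by linarith : (0:ℝ) ≤ Y ⟨⌊(n:ℝ) * p⌋₊, hk⟩ - ξ)]
  · -- k < N : sign = 1
    have hsign : ((N : ℤ) - (⌊(n:ℝ) * p⌋₊ : ℤ)).sign = 1 := by
      rw [Int.sign_eq_one_iff_pos]; omega
    rw [hsign, min_eq_left h.le, max_eq_right h.le]
    push_cast
    have hYk : Y ⟨⌊(n:ℝ) * p⌋₊, hk⟩ ≤ ξ :=
      (hsort ⟨⌊(n:ℝ) * p⌋₊, hk⟩).1 (by simpa using h)
    have hS : (∑ i : Fin n,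
        (if ⌊(n:ℝ) * p⌋₊ ≤ (i:ℕ) ∧ (i:ℕ) < N then Y i - ξ else 0))
        ≤ Y ⟨⌊(n:ℝ) * p⌋₊, hk⟩ - ξ := by
      calc ∑ i : Fin n, (if ⌊(n:ℝ) * p⌋₊ ≤ (i:ℕ) ∧ (i:ℕ) < N then Y i - ξ else 0)
          ≤ ∑ i : Fin n, (if i = ⟨⌊(n:ℝ) * p⌋₊, hk⟩
              then Y ⟨⌊(n:ℝ) * p⌋₊, hk⟩ - ξ else 0) := by
            apply Finset.sum_le_sum
            intro i _
            by_cases hi : i = ⟨⌊(n:ℝ) * p⌋₊, hk⟩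
            · subst hi; simp [h]
            · rw [if_neg hi]
              split_ifs with hc
              · linarith [(hsort i).1 hc.2]
              · exact le_refl 0
        _ = Y ⟨⌊(n:ℝ) * p⌋₊, hk⟩ - ξ := by simp
    nlinarith [mul_nonneg (by linarith : (0:ℝ) ≤ 1 - ((n:ℝ) * p - ⌊(n:ℝ) * p⌋₊))
      (by linarith : (0:ℝ) ≤ ξ - Y ⟨⌊(n:ℝ) * p⌋₊, hk⟩)]
end
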